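/- Let (X,r) be a nondegenerate involutive braided set of finite order, let G = G(X,r), and let K be a field. Then the group algebra K[G] is a left Noetherian and right Noetherian ring. -/

import Mathlib

/-- The left action `σ_x(y)`: first component of `r (x, y)`. -/
def sig {X : Type*} (r : X × X → X × X) (x y : X) : X := (r (x, y)).1

/-- The right action `τ_y(x)`: second component of `r (x, y)`. -/
def tau {X : Type*} (r : X × X → X × X) (y x : X) : X := (r (x, y)).2

/-- `r¹² = r × id`. -/
def r12 {X : Type*} (r : X × X → X × X) : X × X × X → X × X × X :=
  fun t => ((r (t.1, t.2.1)).1, (r (t.1, t.2.1)).2, t.2.2)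

/-- `r²³ = id × r`. -/
def r23 {X : Type*} (r : X × X → X × X) : X × X × X → X × X × X :=
  fun t => (t.1, (r (t.2.1, t.2.2)).1, (r (t.2.1, t.2.2)).2)

/-- The braid relation `r¹² ∘ r²³ ∘ r¹² = r²³ ∘ r¹² ∘ r²³`. -/
def IsBraided {X : Type*} (r : X × X → X × X) : Prop :=
  r12 r ∘ r23 r ∘ r12 r = r23 r ∘ r12 r ∘ r23 r

/-- Nondegeneracy: every `σ_x` and every `τ_y` is bijective. -/
def Nondegenerate {X : Type*} (r : X × X → X × X) : Prop :=
  (∀ x, Function.Bijective (sig r x)) ∧ (∀ y, Function.Bijective (tau r y))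

/-- The defining relators of the group `G(X,r)`:
`x · y · (σ_x(y) · τ_y(x))⁻¹` for all `x, y ∈ X`. -/
def ybRels {X : Type*} (r : X × X → X × X) : Set (FreeGroup X) :=
  { w | ∃ x y : X, w = FreeGroup.of x * FreeGroup.of y *
      (FreeGroup.of (sig r x y) * FreeGroup.of (tau r y x))⁻¹ }

/-- The group `G(X,r)` associated with `(X,r)`, presented by generators `X`
and relations `x y = σ_x(y) τ_y(x)`. -/
abbrev YBGroup {X : Type*} (r : X × X → X × X) := PresentedGroup (ybRels r)

/-- The canonical map `ι : X → G(X,r)`. -/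
def ybι {X : Type*} (r : X × X → X × X) : X → YBGroup r := PresentedGroup.of

set_option linter.unusedSectionVars false
set_option maxHeartbeats 1000000

section Aux
variable {X : Type*} (r : X × X → X × X)

lemma r_eq (x y : X) : r (x, y) = (sig r x y, tau r y x) := rfl

/-- involutivity, first component -/
lemma inv_sig (hinv : Function.Involutive r) (x y : X) :
    sig r (sig r x y) (tau r y x) = x := by
  exact congrArg Prod.fst (hinv (x, y))

lemma inv_tau (hinv : Function.Involutive r) (x y : X) :
    tau r (tau r y x) (sig r x y) = y := by
  exact congrArg Prod.snd (hinv (x, y))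

/-- braid relation, first components -/
lemma braid_sig (hbr : IsBraided r) (x y z : X) :
    sig r (sig r x y) (sig r (tau r y x) z) = sig r x (sig r y z) := by
  have h := congrFun hbr (x, y, z)
  simpa [r12, r23, sig, tau, Function.comp] using congrArg Prod.fst h

end Aux

section Defs
variable {X : Type*} [DecidableEq X] (r : X × X → X × X)

/-- `σ_x` as a permutation. -/
noncomputable def sigE (hnd : Nondegenerate r) (x : X) : Equiv.Perm X :=
  Equiv.ofBijective _ (hnd.1 x)

@[simp] lemma sigE_apply (hnd : Nondegenerate r) (x y : X) :
    sigE r hnd x y = sig r x y := rfl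

/-- basis vector over ℤ -/
def eZ (x : X) : X → ℤ := fun z => if z = x then 1 else 0
/-- basis vector over ℕ -/
def eN (x : X) : X → ℕ := fun z => if z = x then 1 else 0

/-- The ℕ-valued cocycle on words. -/
noncomputable def PiW (hnd : Nondegenerate r) : List X → X → ℕ
  | [] => fun _ => 0
  | x :: w => fun z => eN x z + PiW hnd w ((sigE r hnd x).symm z)

/-- The affine transformation attached to a generator. -/
noncomputable def TT (hnd : Nondegenerate r) (x : X) : Equiv.Perm (X → ℤ) :=
  (Equiv.arrowCongr (sigE r hnd x) (Equiv.refl ℤ)).trans (Equiv.addLeft (eZ x))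

lemma TT_apply (hnd : Nondegenerate r) (x : X) (a : X → ℤ) :
    TT r hnd x a = fun z => eZ x z + a ((sigE r hnd x).symm z) := rfl

/-- product of a word in the YB group -/
def prodG (w : List X) : YBGroup r := (w.map (ybι r)).prod

@[simp] lemma prodG_nil : prodG r [] = 1 := rfl
@[simp] lemma prodG_cons (x : X) (w : List X) :
    prodG r (x :: w) = ybι r x * prodG r w := by simp [prodG]
lemma prodG_append (w v : List X) :
    prodG r (w ++ v) = prodG r w * prodG r v := by simp [prodG]

/-- the defining relation holds in the YB group -/
lemma ybrel (x y : X) :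
    ybι r x * ybι r y = ybι r (sig r x y) * ybι r (tau r y x) := by
  have hmem : FreeGroup.of x * FreeGroup.of y *
      (FreeGroup.of (sig r x y) * FreeGroup.of (tau r y x))⁻¹ ∈
      Subgroup.normalClosure (ybRels r) :=
    Subgroup.subset_normalClosure ⟨x, y, rfl⟩
  have h1 : (PresentedGroup.mk (ybRels r)) (FreeGroup.of x * FreeGroup.of y *
      (FreeGroup.of (sig r x y) * FreeGroup.of (tau r y x))⁻¹) = 1 :=
    (QuotientGroup.eq_one_iff _).mpr hmem
  rw [map_mul, map_mul, map_inv, map_mul, mul_inv_eq_one] at h1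
  exact h1

end Defs

section Homs
variable {X : Type*} [DecidableEq X] (r : X × X → X × X)

lemma eZ_comp (hnd : Nondegenerate r) (x y z : X) :
    eZ y ((sigE r hnd x).symm z) = eZ (sig r x y) z := by
  unfold eZ
  congr 1
  simp only [eq_iff_iff]
  rw [Equiv.symm_apply_eq]
  exact ⟨fun h => by rw [h]; rfl, fun h => by rw [h]; rfl⟩

lemma eN_comp (hnd : Nondegenerate r) (x y z : X) :
    eN y ((sigE r hnd x).symm z) = eN (sig r x y) z := by
  unfold eN
  congr 1
  simp only [eq_iff_iff]
  rw [Equiv.symm_apply_eq]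
  exact ⟨fun h => by rw [h]; rfl, fun h => by rw [h]; rfl⟩

/-- the braid relation for the permutations `σ`. -/
lemma sigE_braid (hnd : Nondegenerate r) (hbr : IsBraided r) (x y : X) :
    (sigE r hnd (tau r y x)).trans (sigE r hnd (sig r x y)) =
      (sigE r hnd y).trans (sigE r hnd x) := by
  ext z
  simpa using braid_sig r hbr x y z

lemma sigE_braid_symm (hnd : Nondegenerate r) (hbr : IsBraided r) (x y z : X) :
    (sigE r hnd (tau r y x)).symm ((sigE r hnd (sig r x y)).symm z) =
      (sigE r hnd y).symm ((sigE r hnd x).symm z) := by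
  have h := congrArg Equiv.symm (sigE_braid r hnd hbr x y)
  simpa [Equiv.symm_trans_apply] using congrFun (congrArg (fun (e : Equiv.Perm X) => (e : X → X)) h) z

/-- relation check for the affine representation -/
lemma TT_rel (hnd : Nondegenerate r) (hinv : Function.Involutive r) (hbr : IsBraided r)
    (x y : X) :
    TT r hnd x * TT r hnd y = TT r hnd (sig r x y) * TT r hnd (tau r y x) := by
  ext a z
  simp only [Equiv.Perm.mul_apply, TT_apply]
  rw [eZ_comp r hnd, eZ_comp r hnd, inv_sig r hinv, sigE_braid_symm r hnd hbr]
  ring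

/-- the permutation representation `ψ` on `X` -/
noncomputable def psiHom (hnd : Nondegenerate r) (hbr : IsBraided r) :
    YBGroup r →* Equiv.Perm X :=
  PresentedGroup.toGroup (f := sigE r hnd) (by
    rintro w ⟨x, y, rfl⟩
    rw [map_mul, map_mul, map_inv, map_mul, mul_inv_eq_one]
    simp only [FreeGroup.lift_apply_of]
    ext z
    simpa using (braid_sig r hbr x y z).symm)

@[simp] lemma psiHom_of (hnd : Nondegenerate r) (hbr : IsBraided r) (x : X) :
    psiHom r hnd hbr (ybι r x) = sigE r hnd x := by
  apply PresentedGroup.toGroup.of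

/-- the affine representation `φ` on `X → ℤ` -/
noncomputable def phiHom (hnd : Nondegenerate r) (hinv : Function.Involutive r)
    (hbr : IsBraided r) : YBGroup r →* Equiv.Perm (X → ℤ) :=
  PresentedGroup.toGroup (f := TT r hnd) (by
    rintro w ⟨x, y, rfl⟩
    rw [map_mul, map_mul, map_inv, map_mul, mul_inv_eq_one]
    simp only [FreeGroup.lift_apply_of]
    exact TT_rel r hnd hinv hbr x y)

@[simp] lemma phiHom_of (hnd : Nondegenerate r) (hinv : Function.Involutive r)
    (hbr : IsBraided r) (x : X) :
    phiHom r hnd hinv hbr (ybι r x) = TT r hnd x := by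
  apply PresentedGroup.toGroup.of

end Homs

section Cocycle
variable {X : Type*} [DecidableEq X] (r : X × X → X × X)

lemma phi_prod_zero (hnd : Nondegenerate r) (hinv : Function.Involutive r)
    (hbr : IsBraided r) (w : List X) :
    phiHom r hnd hinv hbr (prodG r w) 0 = fun z => ((PiW r hnd w z : ℤ)) := by
  induction w with
  | nil => simp [PiW]; rfl
  | cons x w ih =>
      rw [prodG_cons, map_mul, Equiv.Perm.mul_apply, ih, phiHom_of, TT_apply]
      funext z
      simp [PiW, eZ, eN]

lemma PiW_sum [Fintype X] (hnd : Nondegenerate r) (w : List X) :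
    ∑ z, PiW r hnd w z = w.length := by
  induction w with
  | nil => simp [PiW]
  | cons x w ih =>
      show ∑ z, (eN x z + PiW r hnd w ((sigE r hnd x).symm z)) = w.length + 1
      rw [Finset.sum_add_distrib]
      have h1 : ∑ z, eN x z = 1 := by simp [eN]
      have h2 : ∑ z, PiW r hnd w ((sigE r hnd x).symm z) = ∑ z, PiW r hnd w z :=
        Equiv.sum_comp (sigE r hnd x).symm (PiW r hnd w)
      rw [h1, h2, ih]; omega

lemma PiW_rel (hnd : Nondegenerate r) (hinv : Function.Involutive r)
    (hbr : IsBraided r) (a b : X) (u : List X) :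
    PiW r hnd (sig r a b :: tau r b a :: u) = PiW r hnd (a :: b :: u) := by
  funext z
  show eN (sig r a b) z + (eN (tau r b a) ((sigE r hnd (sig r a b)).symm z) +
      PiW r hnd u ((sigE r hnd (tau r b a)).symm ((sigE r hnd (sig r a b)).symm z)))
    = eN a z + (eN b ((sigE r hnd a).symm z) +
      PiW r hnd u ((sigE r hnd b).symm ((sigE r hnd a).symm z)))
  rw [eN_comp r hnd, eN_comp r hnd, inv_sig r hinv, sigE_braid_symm r hnd hbr]
  omega

lemma prodG_rel (hnd : Nondegenerate r) (a b : X) (u : List X) :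
    prodG r (a :: b :: u) = prodG r (sig r a b :: tau r b a :: u) := by
  simp only [prodG_cons, ← mul_assoc, ybrel r a b]

/-- Pull a letter occurring in the cocycle to the front of a word. -/
lemma pull (hnd : Nondegenerate r) (hinv : Function.Involutive r) (hbr : IsBraided r) :
    ∀ (w : List X) (y : X), 1 ≤ PiW r hnd w y →
      ∃ u : List X, prodG r w = prodG r (y :: u) ∧ PiW r hnd (y :: u) = PiW r hnd w := by
  intro w
  induction w with
  | nil => intro y hy; simp [PiW] at hy
  | cons x w ih =>
      intro y hy
      by_cases hxy : x = y
      · exact ⟨w, by rw [hxy], by rw [hxy]⟩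
      · set y' := (sigE r hnd x).symm y with hy'
        have hle : 1 ≤ PiW r hnd w y' := by
          have : PiW r hnd (x :: w) y = eN x y + PiW r hnd w y' := rfl
          rw [this] at hy
          have : eN x y = 0 := by simp [eN, Ne.symm hxy]
          omega
        obtain ⟨u', hp, hpi⟩ := ih y' hle
        refine ⟨tau r y' x :: u', ?_, ?_⟩
        · have h1 : prodG r (x :: w) = prodG r (x :: y' :: u') := by
            rw [prodG_cons, prodG_cons, hp]
          have h2 : prodG r (x :: y' :: u') = prodG r (sig r x y' :: tau r y' x :: u') :=
            prodG_rel r hnd x y' u'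
          have h3 : sig r x y' = y := by
            show sigE r hnd x ((sigE r hnd x).symm y) = y
            exact (sigE r hnd x).apply_symm_apply y
          rw [h1, h2, h3]
        · have h3 : sig r x y' = y := (sigE r hnd x).apply_symm_apply y
          calc PiW r hnd (y :: tau r y' x :: u')
              = PiW r hnd (sig r x y' :: tau r y' x :: u') := by rw [h3]
            _ = PiW r hnd (x :: y' :: u') := PiW_rel r hnd hinv hbr x y' u'
            _ = PiW r hnd (x :: w) := by
                funext z
                show eN x z + PiW r hnd (y' :: u') ((sigE r hnd x).symm z)
                  = eN x z + PiW r hnd w ((sigE r hnd x).symm z)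
                rw [hpi]

/-- words with equal cocycle have equal product in the group -/
lemma piW_inj [Fintype X] (hnd : Nondegenerate r) (hinv : Function.Involutive r)
    (hbr : IsBraided r) :
    ∀ (w v : List X), PiW r hnd w = PiW r hnd v → prodG r w = prodG r v := by
  intro w
  induction w with
  | nil =>
      intro v h
      have hlen : (v.length : ℕ) = 0 := by
        rw [← PiW_sum r hnd v, ← h]
        simp [PiW]
      rw [List.length_eq_zero_iff] at hlen
      rw [hlen]
  | cons x w ih =>
      intro v h
      have hx : 1 ≤ PiW r hnd v x := by
        rw [← h]
        have : PiW r hnd (x :: w) x = eN x x + PiW r hnd w ((sigE r hnd x).symm x) := rfl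
        rw [this]
        simp [eN]
      obtain ⟨u, hp, hpi⟩ := pull r hnd hinv hbr v x hx
      have hu : PiW r hnd u = PiW r hnd w := by
        funext z
        have hz := congrFun (hpi.trans h.symm) (sigE r hnd x z)
        have e1 : (sigE r hnd x).symm (sigE r hnd x z) = z := (sigE r hnd x).symm_apply_apply z
        simp only [PiW, e1] at hz
        omega
      rw [hp, prodG_cons, prodG_cons, ih u hu.symm]

lemma oreSingle (hnd : Nondegenerate r) :
    ∀ (w : List X) (x : X), ∃ p q : List X,
      (ybι r x)⁻¹ * prodG r w = prodG r p * (prodG r q)⁻¹ := by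
  intro w
  induction w with
  | nil => intro x; exact ⟨[], [x], by simp⟩
  | cons y w ih =>
      intro x
      set b := (sigE r hnd x).symm y with hb
      have hrel : ybι r x * ybι r b = ybι r y * ybι r (tau r b x) := by
        have := ybrel r x b
        rwa [show sig r x b = y from (sigE r hnd x).apply_symm_apply y] at this
      obtain ⟨p', q', hpq⟩ := ih (tau r b x)
      refine ⟨b :: p', q', ?_⟩
      have h1 : (ybι r x)⁻¹ * prodG r (y :: w)
          = ybι r b * ((ybι r (tau r b x))⁻¹ * prodG r w) := by
        rw [prodG_cons]
        have : ybι r y = ybι r x * ybι r b * (ybι r (tau r b x))⁻¹ := by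
          rw [hrel]; group
        rw [this]; group
      rw [h1, hpq, prodG_cons, mul_assoc]

lemma oreList (hnd : Nondegenerate r) :
    ∀ (v w : List X), ∃ p q : List X,
      (prodG r v)⁻¹ * prodG r w = prodG r p * (prodG r q)⁻¹ := by
  intro v
  induction v with
  | nil => intro w; exact ⟨w, [], by simp⟩
  | cons x v ih =>
      intro w
      obtain ⟨p₁, q₁, h1⟩ := oreSingle r hnd w x
      obtain ⟨p₂, q₂, h2⟩ := ih p₁
      refine ⟨p₂, q₁ ++ q₂, ?_⟩
      have : (prodG r (x :: v))⁻¹ * prodG r w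
          = (prodG r v)⁻¹ * ((ybι r x)⁻¹ * prodG r w) := by
        rw [prodG_cons]; group
      rw [this, h1, ← mul_assoc, h2, prodG_append]
      group

lemma fraction (hnd : Nondegenerate r) (g : YBGroup r) :
    ∃ w v : List X, g = prodG r w * (prodG r v)⁻¹ := by
  let S : Subgroup (YBGroup r) :=
    { carrier := {g | ∃ w v : List X, g = prodG r w * (prodG r v)⁻¹}
      one_mem' := ⟨[], [], by simp⟩
      mul_mem' := by
        rintro a b ⟨w, v, rfl⟩ ⟨w', v', rfl⟩
        obtain ⟨p, q, hpq⟩ := oreList r hnd v w'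
        refine ⟨w ++ p, v' ++ q, ?_⟩
        rw [prodG_append, prodG_append]
        calc prodG r w * (prodG r v)⁻¹ * (prodG r w' * (prodG r v')⁻¹)
            = prodG r w * ((prodG r v)⁻¹ * prodG r w') * (prodG r v')⁻¹ := by group
          _ = prodG r w * (prodG r p * (prodG r q)⁻¹) * (prodG r v')⁻¹ := by rw [hpq]
          _ = prodG r w * prodG r p * ((prodG r v') * prodG r q)⁻¹ := by group
      inv_mem' := by
        rintro a ⟨w, v, rfl⟩
        exact ⟨v, w, by group⟩ }
  exact PresentedGroup.generated_by (ybRels r) S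
    (fun j => ⟨[j], [], by simp [ybι]⟩) g

lemma phi_inj [Fintype X] (hnd : Nondegenerate r) (hinv : Function.Involutive r)
    (hbr : IsBraided r) : Function.Injective (phiHom r hnd hinv hbr) := by
  rw [injective_iff_map_eq_one (phiHom r hnd hinv hbr)]
  intro g hg
  obtain ⟨w, v, rfl⟩ := fraction r hnd g
  rw [mul_inv_eq_one]
  have hphi : phiHom r hnd hinv hbr (prodG r w) = phiHom r hnd hinv hbr (prodG r v) := by
    have : phiHom r hnd hinv hbr (prodG r w) * (phiHom r hnd hinv hbr (prodG r v))⁻¹ = 1 := by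
      rw [← map_inv, ← map_mul]; exact hg
    rwa [mul_inv_eq_one] at this
  have hzero := congrArg (fun (p : Equiv.Perm (X → ℤ)) => p 0) hphi
  rw [phi_prod_zero, phi_prod_zero] at hzero
  have hPiw : PiW r hnd w = PiW r hnd v := by
    funext z
    have := congrFun hzero z
    exact_mod_cast this
  exact piW_inj r hnd hinv hbr w v hPiw

end Cocycle

section Affine
variable {X : Type*} [DecidableEq X] (r : X × X → X × X)

/-- every element of the YB group acts affinely, with linear part given by `ψ`. -/
lemma affine (hnd : Nondegenerate r) (hinv : Function.Involutive r) (hbr : IsBraided r)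
    (g : YBGroup r) (a : X → ℤ) :
    phiHom r hnd hinv hbr g a
      = fun z => phiHom r hnd hinv hbr g 0 z + a ((psiHom r hnd hbr g)⁻¹ z) := by
  set φ := phiHom r hnd hinv hbr with hφ
  set ψ := psiHom r hnd hbr with hψ
  let S : Subgroup (YBGroup r) :=
    { carrier := {g | ∀ a : X → ℤ, φ g a = fun z => φ g 0 z + a ((ψ g)⁻¹ z)}
      one_mem' := by intro a; simp
      mul_mem' := by
        intro g g' hg hg' c
        have h1 : φ (g * g') c = φ g (φ g' c) := by rw [map_mul]; rfl
        have h0 : φ (g * g') 0 = φ g (φ g' 0) := by rw [map_mul]; rfl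
        rw [h1, hg (φ g' c), hg' c, h0, hg (φ g' 0)]
        funext z
        have hz : (ψ (g * g'))⁻¹ z = (ψ g')⁻¹ ((ψ g)⁻¹ z) := by
          rw [map_mul, mul_inv_rev]; rfl
        rw [hz]
        ring
      inv_mem' := by
        intro g hg a
        apply (φ g).injective
        have hone : φ g * φ g⁻¹ = 1 := by rw [← map_mul, mul_inv_cancel, map_one]
        have h1 : φ g (φ g⁻¹ a) = a := by
          have := congrFun (congrArg (fun (e : Equiv.Perm (X → ℤ)) => (e : (X → ℤ) → (X → ℤ)))
            hone) a
          simpa using this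
        have h0 : φ g (φ g⁻¹ 0) = 0 := by
          have := congrFun (congrArg (fun (e : Equiv.Perm (X → ℤ)) => (e : (X → ℤ) → (X → ℤ)))
            hone) 0
          simpa using this
        rw [h1, hg]
        funext z
        have hz : (ψ g⁻¹)⁻¹ ((ψ g)⁻¹ z) = z := by
          rw [map_inv, inv_inv]; exact (ψ g).apply_symm_apply z
        rw [hz]
        have h0z := congrFun ((hg (φ g⁻¹ 0)).symm.trans h0) z
        simp only [Pi.zero_apply] at h0z ⊢
        omega }
  have hmem : g ∈ S := by
    apply PresentedGroup.generated_by (ybRels r) S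
    intro j
    show ∀ a : X → ℤ, φ (ybι r j) a = fun z => φ (ybι r j) 0 z + a ((ψ (ybι r j))⁻¹ z)
    intro a
    have h1 : φ (ybι r j) = TT r hnd j := phiHom_of r hnd hinv hbr j
    have h2 : ψ (ybι r j) = sigE r hnd j := psiHom_of r hnd hbr j
    rw [h1, h2, TT_apply, TT_apply]
    funext z
    simp only [Pi.zero_apply, add_zero]
    rfl
  exact hmem a

lemma ker_psi_comm [Fintype X] (hnd : Nondegenerate r) (hinv : Function.Involutive r)
    (hbr : IsBraided r) {a b : YBGroup r}
    (ha : a ∈ (psiHom r hnd hbr).ker) (hb : b ∈ (psiHom r hnd hbr).ker) :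
    a * b = b * a := by
  apply phi_inj r hnd hinv hbr
  set φ := phiHom r hnd hinv hbr with hφ
  have key : ∀ (g : YBGroup r), g ∈ (psiHom r hnd hbr).ker →
      ∀ (c : X → ℤ) (z : X), φ g c z = φ g 0 z + c z := by
    intro g hg c z
    have := congrFun (affine r hnd hinv hbr g c) z
    rw [MonoidHom.mem_ker.mp hg] at this
    simpa using this
  apply Equiv.ext
  intro c
  funext z
  have h1 : φ (a * b) c z = φ a (φ b c) z := by rw [map_mul]; rfl
  have h2 : φ (b * a) c z = φ b (φ a c) z := by rw [map_mul]; rfl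
  rw [h1, h2, key a ha (φ b c) z, key b hb c z, key b hb (φ a c) z, key a ha c z]
  ring

end Affine

section Alg

/-- If a group has a subgroup of finite index that is finitely generated and
commutative, then its monoid algebra over a field is a Noetherian ring. -/
theorem monoidAlgebra_noetherian_of_subgroup {G : Type*} [Group G] (K : Type*) [Field K]
    (H : Subgroup G) (hq : Finite (G ⧸ H)) (hfg : Monoid.FG H)
    (hab : ∀ a b : H, a * b = b * a) :
    IsNoetherianRing (MonoidAlgebra K G) := by
  classical
  letI : CommGroup H := { (inferInstance : Group H) with mul_comm := hab }
  haveI : Monoid.FG ↥H := hfg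
  haveI : Algebra.FiniteType K (MonoidAlgebra K ↥H) := inferInstance
  haveI : IsNoetherianRing (MonoidAlgebra K ↥H) :=
    Algebra.FiniteType.isNoetherianRing K (MonoidAlgebra K ↥H)
  set R := MonoidAlgebra K ↥H
  set S := MonoidAlgebra K G
  let f : R →+* S := MonoidAlgebra.mapDomainRingHom K H.subtype
  letI : Module R S := f.toModule
  have smul_def : ∀ (a : R) (s : S), a • s = f a * s := fun a s => rfl
  letI : IsScalarTower R S S :=
    ⟨fun a s t => by simp only [smul_eq_mul, smul_def, mul_assoc]⟩
  haveI : Fintype (G ⧸ H) := Fintype.ofFinite _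
  have hfin : Module.Finite R S := by
    rw [Module.finite_def, Submodule.fg_def]
    refine ⟨(fun (γ : G ⧸ H) => MonoidAlgebra.of K G (Quotient.out γ)⁻¹) '' Set.univ,
      Set.Finite.image _ (Set.finite_univ), ?_⟩
    rw [eq_top_iff]
    intro s hs
    clear hs
    induction s using MonoidAlgebra.induction with
    | zero => exact Submodule.zero_mem _
    | single_add g k rest _ _ ih =>
        refine Submodule.add_mem _ ?_ ih
        set γ : G ⧸ H := QuotientGroup.mk g⁻¹ with hγ
        have hmem : g * Quotient.out γ ∈ H := by
          have : (QuotientGroup.mk g⁻¹ : G ⧸ H) = QuotientGroup.mk (Quotient.out γ) := by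
            rw [hγ, QuotientGroup.out_eq']
          rw [QuotientGroup.eq] at this
          simpa using this
        have hf : f (MonoidAlgebra.single (⟨g * Quotient.out γ, hmem⟩ : ↥H) k)
            = MonoidAlgebra.single (g * Quotient.out γ) k := by
          show MonoidAlgebra.mapDomain (H.subtype) (MonoidAlgebra.single _ k) = _
          rw [MonoidAlgebra.mapDomain_single]
          rfl
        have key : (MonoidAlgebra.single g k : S)
            = (MonoidAlgebra.single (⟨g * Quotient.out γ, hmem⟩ : ↥H) k : R) •
              MonoidAlgebra.of K G (Quotient.out γ)⁻¹ := by
          rw [smul_def, hf, MonoidAlgebra.of_apply, MonoidAlgebra.single_mul_single]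
          rw [mul_one, mul_inv_cancel_right]
        rw [key]
        exact Submodule.smul_mem _ _ (Submodule.subset_span ⟨γ, Set.mem_univ _, rfl⟩)
  haveI : IsNoetherian R S := isNoetherian_of_isNoetherianRing_of_finite R S
  have : IsNoetherian S S := isNoetherian_of_tower R this
  rw [isNoetherianRing_iff]
  exact this

end Alg

/-- For a finite nondegenerate involutive braided set
`(X,r)` and a field `K`, the group algebra `K[G(X,r)]` is left Noetherian and
right Noetherian. -/
theorem groupAlgebra_noetherian {X : Type*} [Fintype X] (r : X × X → X × X)
    (hnd : Nondegenerate r) (hinv : Function.Involutive r) (hbr : IsBraided r)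
    (K : Type*) [Field K] :
    IsNoetherianRing (MonoidAlgebra K (YBGroup r)) ∧
      IsNoetherianRing (MonoidAlgebra K (YBGroup r))ᵐᵒᵖ := by
  classical
  set G := YBGroup r
  have hFG : Group.FG G := by
    rw [Group.fg_iff]
    exact ⟨Set.range (ybι r), PresentedGroup.closure_range_of (ybRels r),
      Set.finite_range _⟩
  set ψ := psiHom r hnd hbr with hψ
  -- the kernel of ψ
  constructor
  · -- left Noetherian
    set H := ψ.ker
    haveI : Finite (G ⧸ H) :=
      Finite.of_equiv _ (QuotientGroup.quotientKerEquivRange ψ).toEquiv.symm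
    haveI : H.FiniteIndex := Subgroup.finiteIndex_of_finite_quotient (H := H)
    haveI : Group.FG ↥H := Subgroup.fg_of_index_ne_zero H
    refine monoidAlgebra_noetherian_of_subgroup K H inferInstance
      (Group.fg_iff_monoid_fg.mp inferInstance) ?_
    intro a b
    exact Subtype.ext (ker_psi_comm r hnd hinv hbr a.2 b.2)
  · -- right Noetherian, via the opposite group
    let ε : Gᵐᵒᵖ ≃* G := (MulEquiv.inv' G).symm
    haveI : Group.FG Gᵐᵒᵖ := Group.fg_of_surjective (f := (MulEquiv.inv' G).toMonoidHom)
      (MulEquiv.inv' G).surjective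
    set ψ' : Gᵐᵒᵖ →* Equiv.Perm X := ψ.comp ε.toMonoidHom with hψ'
    set H' := ψ'.ker
    haveI : Finite (Gᵐᵒᵖ ⧸ H') :=
      Finite.of_equiv _ (QuotientGroup.quotientKerEquivRange ψ').toEquiv.symm
    haveI : H'.FiniteIndex := Subgroup.finiteIndex_of_finite_quotient (H := H')
    haveI : Group.FG ↥H' := Subgroup.fg_of_index_ne_zero H'
    have hN : IsNoetherianRing (MonoidAlgebra Kᵐᵒᵖ Gᵐᵒᵖ) := by
      refine monoidAlgebra_noetherian_of_subgroup Kᵐᵒᵖ H' inferInstance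
        (Group.fg_iff_monoid_fg.mp inferInstance) ?_
      intro a b
      have ha : ε (↑a) ∈ ψ.ker := a.2
      have hb : ε (↑b) ∈ ψ.ker := b.2
      apply Subtype.ext
      apply ε.injective
      rw [Subgroup.coe_mul, Subgroup.coe_mul, map_mul, map_mul]
      exact ker_psi_comm r hnd hinv hbr ha hb
    exact isNoetherianRing_of_surjective (MonoidAlgebra Kᵐᵒᵖ Gᵐᵒᵖ)
      ((MonoidAlgebra K G)ᵐᵒᵖ) (MonoidAlgebra.opRingEquiv.symm :
        MonoidAlgebra Kᵐᵒᵖ Gᵐᵒᵖ ≃+* (MonoidAlgebra K G)ᵐᵒᵖ).toRingHom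
      (MonoidAlgebra.opRingEquiv.symm).surjective
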